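/- Let g(x) = log(x/(1-x)) on (0,1). For any p ∈ (0, 1/2), the chord of g from (p, g(p)) to (1-p, g(1-p)) lies below the graph of g on the interval [p, 1/2]; i.e., for x ∈ [p, 1/2], the line through those two points evaluated at x is at most g(x). -/

import Mathlib

open Real Set

lemma logit_concave (p : ℝ) (hp : p ∈ Set.Ioo (0:ℝ) (1/2)) :
    ConcaveOn ℝ (Set.Icc p (1/2)) (fun y : ℝ => Real.log y - Real.log (1 - y)) := by
  obtain ⟨hp0, hp2⟩ := hp
  have hsub : Set.Icc p (1/2) ⊆ Set.Ioo (0:ℝ) 1 := fun y hy =>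
    ⟨lt_of_lt_of_le hp0 hy.1, lt_of_le_of_lt hy.2 (by norm_num)⟩
  have hint : interior (Set.Icc p (1/2)) = Set.Ioo p (1/2) := interior_Icc
  have hd : ∀ y ∈ Set.Ioo (0:ℝ) 1,
      HasDerivAt (fun y : ℝ => Real.log y - Real.log (1 - y)) (y⁻¹ + (1 - y)⁻¹) y := by
    intro y hy
    have h1 : HasDerivAt Real.log y⁻¹ y := Real.hasDerivAt_log (ne_of_gt hy.1)
    have h2 : HasDerivAt (fun y : ℝ => 1 - y) (-1) y := by
      simpa using (hasDerivAt_id y).const_sub (1:ℝ)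
    have h3 : HasDerivAt (fun y : ℝ => Real.log (1 - y)) ((1 - y)⁻¹ * (-1)) y :=
      (Real.hasDerivAt_log (by linarith [hy.2])).comp y h2
    have := h1.sub h3
    exact this.congr_deriv (by ring)
  have hderiv_eq : ∀ y ∈ Set.Ioo p (1/2),
      deriv (fun y : ℝ => Real.log y - Real.log (1 - y)) y = y⁻¹ + (1 - y)⁻¹ := by
    intro y hy
    exact (hd y ⟨lt_trans hp0 hy.1, by linarith [hy.2]⟩).deriv
  apply concaveOn_of_deriv2_nonpos (convex_Icc _ _)
  · apply ContinuousOn.sub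
    · exact Real.continuousOn_log.comp continuousOn_id (fun y hy => ne_of_gt (hsub hy).1)
    · exact Real.continuousOn_log.comp (continuousOn_const.sub continuousOn_id)
        (fun y hy => by have := (hsub hy).2; simp; linarith)
  · rw [hint]
    intro y hy
    exact ((hd y ⟨lt_trans hp0 hy.1, by linarith [hy.2]⟩).differentiableAt).differentiableWithinAt
  · rw [hint]
    apply DifferentiableOn.congr (f := fun y : ℝ => y⁻¹ + (1 - y)⁻¹)
    · intro y hy
      apply DifferentiableWithinAt.add
      · exact (differentiableAt_inv (ne_of_gt (lt_trans hp0 hy.1))).differentiableWithinAt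
      · exact ((differentiableAt_inv (by intro h; simp at h; linarith [hy.2])).comp y
          ((differentiable_const (1:ℝ)).sub differentiable_id).differentiableAt).differentiableWithinAt
    · exact hderiv_eq
  · rw [hint]
    intro y hy
    have hy0 : (0:ℝ) < y := lt_trans hp0 hy.1
    have hy1 : y < 1/2 := hy.2
    have h1y : (0:ℝ) < 1 - y := by linarith
    have heq : Set.EqOn (deriv (fun y : ℝ => Real.log y - Real.log (1 - y)))
        (fun y : ℝ => y⁻¹ + (1 - y)⁻¹) (Set.Ioo p (1/2)) := hderiv_eq
    have hev : deriv (fun y : ℝ => Real.log y - Real.log (1 - y)) =ᶠ[nhds y]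
        (fun y : ℝ => y⁻¹ + (1 - y)⁻¹) :=
      Filter.eventuallyEq_of_mem (isOpen_Ioo.mem_nhds hy) heq
    have : deriv^[2] (fun y : ℝ => Real.log y - Real.log (1 - y)) y
        = deriv (fun y : ℝ => y⁻¹ + (1 - y)⁻¹) y := by
      simp only [Function.iterate_succ, Function.iterate_zero, Function.comp_apply, id]
      exact hev.deriv_eq
    rw [this]
    have hdi : HasDerivAt (fun y : ℝ => y⁻¹ + (1 - y)⁻¹) (-(y^2)⁻¹ + ((1-y)^2)⁻¹) y := by
      have h1 : HasDerivAt (fun y : ℝ => y⁻¹) (-(y^2)⁻¹) y := by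
        simpa using hasDerivAt_inv (ne_of_gt hy0)
      have h2 : HasDerivAt (fun y : ℝ => 1 - y) (-1) y := by
        simpa using (hasDerivAt_id y).const_sub (1:ℝ)
      have h3 : HasDerivAt (fun y : ℝ => (1 - y)⁻¹) (-((1-y)^2)⁻¹ * (-1)) y :=
        (hasDerivAt_inv (ne_of_gt h1y)).comp y h2
      have := h1.add h3
      exact this.congr_deriv (by ring)
    rw [hdi.deriv]
    have hle : y^2 ≤ (1-y)^2 := by nlinarith
    have : ((1-y)^2)⁻¹ ≤ (y^2)⁻¹ :=
      inv_anti₀ (by positivity) hle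
    linarith

theorem logit_chord_below_graph (p x : ℝ) (hp : p ∈ Set.Ioo (0:ℝ) (1/2))
    (hx : x ∈ Set.Icc p (1/2)) :
    Real.log (p / (1 - p)) +
      (x - p) * (Real.log ((1 - p) / p) - Real.log (p / (1 - p))) / ((1 - p) - p)
    ≤ Real.log (x / (1 - x)) := by
  obtain ⟨hp0, hp2⟩ := hp
  obtain ⟨hxp, hx2⟩ := hx
  have hx0 : (0:ℝ) < x := lt_of_lt_of_le hp0 hxp
  have h1x : (0:ℝ) < 1 - x := by linarith
  have h1p : (0:ℝ) < 1 - p := by linarith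
  have h12p : (0:ℝ) < 1 - 2*p := by linarith
  have hc := logit_concave p ⟨hp0, hp2⟩
  set a : ℝ := (1 - 2*x) / (1 - 2*p) with ha
  set b : ℝ := (2*x - 2*p) / (1 - 2*p) with hb
  have ha0 : 0 ≤ a := by
    apply div_nonneg _ (le_of_lt h12p); linarith
  have hb0 : 0 ≤ b := by
    apply div_nonneg _ (le_of_lt h12p); linarith
  have hab : a + b = 1 := by
    rw [ha, hb, ← add_div]
    field_simp
    ring
  have hcomb : a • p + b • (1/2 : ℝ) = x := by
    simp only [smul_eq_mul, ha, hb]; field_simp; ring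
  have hkey := hc.2 (Set.left_mem_Icc.2 (le_of_lt hp2)) (Set.right_mem_Icc.2 (le_of_lt hp2))
    ha0 hb0 hab
  rw [hcomb] at hkey
  simp only [smul_eq_mul] at hkey
  have hhalf : Real.log (1/2 : ℝ) - Real.log (1 - 1/2) = 0 := by norm_num
  rw [hhalf, mul_zero, add_zero] at hkey
  have hlogx : Real.log (x / (1 - x)) = Real.log x - Real.log (1 - x) :=
    Real.log_div (ne_of_gt hx0) (ne_of_gt h1x)
  have hlogp : Real.log (p / (1 - p)) = Real.log p - Real.log (1 - p) :=
    Real.log_div (ne_of_gt hp0) (ne_of_gt h1p)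
  have hlogp' : Real.log ((1 - p) / p) = Real.log (1 - p) - Real.log p :=
    Real.log_div (ne_of_gt h1p) (ne_of_gt hp0)
  rw [hlogx, hlogp, hlogp']
  have hgoal : Real.log p - Real.log (1 - p) +
      (x - p) * ((Real.log (1 - p) - Real.log p) - (Real.log p - Real.log (1 - p))) / ((1 - p) - p)
      = a * (Real.log p - Real.log (1 - p)) := by
    have hne : (1:ℝ) - 2*p ≠ 0 := ne_of_gt h12p
    have hne2 : (1 - p) - p ≠ 0 := by intro h; apply hne; linarith
    rw [ha]
    rw [show (1 - p) - p = (1:ℝ) - 2*p by ring]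
    rw [div_mul_eq_mul_div, add_div' _ _ _ hne, div_left_inj' hne]
    ring
  rw [hgoal]
  exact hkey
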